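/- The function $\rho(r)=H'(r)/H(r)$ satisfies the Riccati-type ODE $\rho'(r) = 1 - \rho(r)\left(\frac{n}{r}+\rho(r)\right)$ for all $r>0$. -/

import Mathlib

open intervalIntegral Real MeasureTheory Metric

private lemma contF (n : ℕ) (c : ℝ → ℝ) (hc : Continuous c) (s : ℝ) :
    Continuous (fun x => c x * Real.exp (-(s * Real.cos x)) * Real.sin x ^ (n-1)) := by
  fun_prop

/-- generic differentiation under the integral sign -/
private lemma keyDeriv (n : ℕ) (c : ℝ → ℝ) (hc : Continuous c) (hc1 : ∀ x, |c x| ≤ 1) (r : ℝ) :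
    HasDerivAt (fun s => ∫ x in (0:ℝ)..π, c x * Real.exp (-(s * Real.cos x)) * Real.sin x ^ (n-1))
      (∫ x in (0:ℝ)..π,
        (-(Real.cos x * c x)) * Real.exp (-(r * Real.cos x)) * Real.sin x ^ (n-1)) r := by
  have h := intervalIntegral.hasDerivAt_integral_of_dominated_loc_of_deriv_le
    (F := fun s x => c x * Real.exp (-(s * Real.cos x)) * Real.sin x ^ (n-1))
    (F' := fun s x => (-(Real.cos x * c x)) * Real.exp (-(s * Real.cos x)) * Real.sin x ^ (n-1))
    (x₀ := r) (a := 0) (b := π) (μ := volume) (bound := fun _ => Real.exp (|r| + 1))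
    (s := ball r 1) (ball_mem_nhds r one_pos)
    (Filter.Eventually.of_forall fun s => ((contF n c hc s)).aestronglyMeasurable)
    ((contF n c hc r).intervalIntegrable 0 π)
    ((contF n (fun x => -(Real.cos x * c x)) (by fun_prop) r).aestronglyMeasurable)
    ?_ (intervalIntegrable_const) ?_
  · exact h.2
  · refine Filter.Eventually.of_forall fun x _ s hs => ?_
    have hsr : |s| ≤ |r| + 1 := by
      have := abs_sub_abs_le_abs_sub s r
      have h2 : |s - r| < 1 := by simpa [Real.dist_eq] using hs
      linarith
    have hexp : Real.exp (-(s * Real.cos x)) ≤ Real.exp (|r| + 1) := by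
      apply Real.exp_le_exp.2
      have : -(s * Real.cos x) ≤ |s * Real.cos x| := neg_le_abs _
      have h3 : |s * Real.cos x| ≤ |s| := by
        rw [abs_mul]
        exact mul_le_of_le_one_right (abs_nonneg s) (Real.abs_cos_le_one x)
      linarith
    have h1 : |(-(Real.cos x * c x))| ≤ 1 := by
      rw [abs_neg, abs_mul]
      have hx1 := Real.abs_cos_le_one x
      have hx2 := hc1 x
      nlinarith [abs_nonneg (Real.cos x), abs_nonneg (c x)]
    have h3 : |Real.sin x ^ (n-1)| ≤ 1 := by
      rw [abs_pow]
      exact pow_le_one₀ (abs_nonneg _) (Real.abs_sin_le_one x)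
    have hB : |Real.exp (-(s * Real.cos x))| = Real.exp (-(s * Real.cos x)) :=
      abs_of_pos (Real.exp_pos _)
    rw [Real.norm_eq_abs, abs_mul, abs_mul, hB]
    calc |(-(Real.cos x * c x))| * Real.exp (-(s * Real.cos x)) * |Real.sin x ^ (n-1)|
        ≤ 1 * Real.exp (-(s * Real.cos x)) * |Real.sin x ^ (n-1)| :=
          mul_le_mul_of_nonneg_right
            (mul_le_mul_of_nonneg_right h1 (Real.exp_pos _).le) (abs_nonneg _)
      _ = Real.exp (-(s * Real.cos x)) * |Real.sin x ^ (n-1)| := by ring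
      _ ≤ Real.exp (-(s * Real.cos x)) * 1 :=
          mul_le_mul_of_nonneg_left h3 (Real.exp_pos _).le
      _ = Real.exp (-(s * Real.cos x)) := mul_one _
      _ ≤ Real.exp (|r| + 1) := hexp
  · refine Filter.Eventually.of_forall fun x _ s hs => ?_
    have hinner : HasDerivAt (fun s : ℝ => -(s * Real.cos x)) (-Real.cos x) s :=
      (hasDerivAt_mul_const (Real.cos x)).neg
    have hexp := hinner.exp
    have := (hexp.const_mul (c x)).mul_const (Real.sin x ^ (n-1))
    refine this.congr_deriv ?_
    ring

private lemma Hpos (n : ℕ) (r : ℝ) :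
    0 < ∫ x in (0:ℝ)..π, Real.exp (-(r * Real.cos x)) * Real.sin x ^ (n-1) := by
  apply intervalIntegral.intervalIntegral_pos_of_pos_on
  · exact (by fun_prop : Continuous fun x => Real.exp (-(r * Real.cos x)) * Real.sin x ^ (n-1)).intervalIntegrable 0 π
  · intro x hx
    have hs : 0 < Real.sin x := Real.sin_pos_of_pos_of_lt_pi hx.1 hx.2
    positivity
  · exact Real.pi_pos

/-- the integration-by-parts identity -/
private lemma ibp (n : ℕ) (hn : 1 ≤ n) (r : ℝ) :
    (n : ℝ) * (∫ x in (0:ℝ)..π, Real.cos x * Real.exp (-(r * Real.cos x)) * Real.sin x ^ (n-1))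
      = -r * ((∫ x in (0:ℝ)..π, Real.exp (-(r * Real.cos x)) * Real.sin x ^ (n-1))
          - ∫ x in (0:ℝ)..π,
              Real.cos x ^ 2 * Real.exp (-(r * Real.cos x)) * Real.sin x ^ (n-1)) := by
  set g : ℝ → ℝ := fun x => Real.exp (-(r * Real.cos x)) * Real.sin x ^ n with hg
  have hderiv : ∀ x ∈ Set.uIcc (0:ℝ) π, HasDerivAt g
      (r * (Real.exp (-(r * Real.cos x)) * Real.sin x ^ (n+1))
        + (n:ℝ) * (Real.cos x * Real.exp (-(r * Real.cos x)) * Real.sin x ^ (n-1))) x := by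
    intro x _
    have h1 : HasDerivAt (fun x : ℝ => -(r * Real.cos x)) (r * Real.sin x) x := by
      have := ((Real.hasDerivAt_cos x).const_mul r).neg
      exact this.congr_deriv (by ring)
    have h2 := h1.exp
    have h3 : HasDerivAt (fun x : ℝ => Real.sin x ^ n)
        ((n:ℝ) * Real.sin x ^ (n-1) * Real.cos x) x := (Real.hasDerivAt_sin x).pow n
    have h4 := h2.mul h3
    refine h4.congr_deriv ?_
    have hpow : Real.sin x ^ (n+1) = Real.sin x * Real.sin x ^ n := (pow_succ' _ _)
    rw [hpow]
    ring
  have hint : ∀ s : ℝ → ℝ, Continuous s → IntervalIntegrable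
      (fun x => s x * Real.exp (-(r * Real.cos x)) * Real.sin x ^ (n-1)) volume 0 π :=
    fun s hs => (contF n s hs r).intervalIntegrable 0 π
  have hcont : IntervalIntegrable (fun x =>
      r * (Real.exp (-(r * Real.cos x)) * Real.sin x ^ (n+1))
        + (n:ℝ) * (Real.cos x * Real.exp (-(r * Real.cos x)) * Real.sin x ^ (n-1)))
      volume 0 π := by
    apply Continuous.intervalIntegrable; fun_prop
  have hftc := intervalIntegral.integral_eq_sub_of_hasDerivAt hderiv hcont
  have hg0 : g π - g 0 = 0 := by
    simp [hg, Real.sin_pi, Real.sin_zero, zero_pow (by omega : n ≠ 0)]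
  rw [hg0] at hftc
  -- split the integral
  have hI1 : IntervalIntegrable (fun x =>
      r * (Real.exp (-(r * Real.cos x)) * Real.sin x ^ (n+1))) volume 0 π := by
    apply Continuous.intervalIntegrable; fun_prop
  have hI2 : IntervalIntegrable (fun x =>
      (n:ℝ) * (Real.cos x * Real.exp (-(r * Real.cos x)) * Real.sin x ^ (n-1))) volume 0 π := by
    apply Continuous.intervalIntegrable; fun_prop
  rw [intervalIntegral.integral_add hI1 hI2, intervalIntegral.integral_const_mul,
    intervalIntegral.integral_const_mul] at hftc
  -- rewrite ∫ e sin^{n+1} = H - H2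
  have hsplit : (∫ x in (0:ℝ)..π, Real.exp (-(r * Real.cos x)) * Real.sin x ^ (n+1))
      = (∫ x in (0:ℝ)..π, Real.exp (-(r * Real.cos x)) * Real.sin x ^ (n-1))
        - ∫ x in (0:ℝ)..π, Real.cos x ^ 2 * Real.exp (-(r * Real.cos x)) * Real.sin x ^ (n-1) := by
    rw [← intervalIntegral.integral_sub ((by fun_prop : Continuous fun x =>
      Real.exp (-(r * Real.cos x)) * Real.sin x ^ (n-1)).intervalIntegrable 0 π)
      ((by fun_prop : Continuous fun x =>
        Real.cos x ^ 2 * Real.exp (-(r * Real.cos x)) * Real.sin x ^ (n-1)).intervalIntegrable 0 π)]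
    apply intervalIntegral.integral_congr
    intro x _
    have hpow : Real.sin x ^ (n+1) = Real.sin x ^ (n-1) * Real.sin x ^ 2 := by
      rw [← pow_add]; congr 1; omega
    have hsc : Real.sin x ^ 2 = 1 - Real.cos x ^ 2 := Real.sin_sq x
    simp only [hpow, hsc]
    ring
  rw [hsplit] at hftc
  linarith

theorem stmt13 (n : ℕ) (hn : 1 ≤ n) (H H1 ρ : ℝ → ℝ)
    (hH : ∀ r, H r = ∫ x in (0:ℝ)..π, Real.exp (-(r * Real.cos x)) * (Real.sin x) ^ (n - 1))
    (hH1 : ∀ r, H1 r =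
      -∫ x in (0:ℝ)..π, Real.cos x * Real.exp (-(r * Real.cos x)) * (Real.sin x) ^ (n - 1))
    (hρ : ∀ r, ρ r = H1 r / H r) :
    ∀ r : ℝ, 0 < r → deriv ρ r = 1 - ρ r * ((n : ℝ) / r + ρ r) := by
  intro r hr
  have hHfun : H = fun s => ∫ x in (0:ℝ)..π,
      Real.exp (-(s * Real.cos x)) * Real.sin x ^ (n-1) := funext hH
  have hH1fun : H1 = fun s => -∫ x in (0:ℝ)..π,
      Real.cos x * Real.exp (-(s * Real.cos x)) * Real.sin x ^ (n-1) := funext hH1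
  have hρfun : ρ = fun s => H1 s / H s := funext hρ
  set H2r : ℝ := ∫ x in (0:ℝ)..π,
      Real.cos x ^ 2 * Real.exp (-(r * Real.cos x)) * Real.sin x ^ (n-1) with hH2r
  -- derivative of H is H1
  have hdH : HasDerivAt H (H1 r) r := by
    rw [hHfun, hH1 r]
    have h := keyDeriv n (fun _ => 1) continuous_const (fun x => by norm_num) r
    simp only [one_mul, mul_one] at h
    convert h using 1
    rw [← intervalIntegral.integral_neg]
    congr 1; funext x; ring
  -- derivative of H1 is H2r
  have hdH1 : HasDerivAt H1 H2r r := by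
    rw [hH1fun, hH2r]
    have h := (keyDeriv n Real.cos Real.continuous_cos
      (fun x => Real.abs_cos_le_one x) r).neg
    refine h.congr_deriv ?_
    rw [← intervalIntegral.integral_neg]
    congr 1; funext x; ring
  have hHpos : 0 < H r := by rw [hH]; exact Hpos n r
  have hHne : H r ≠ 0 := ne_of_gt hHpos
  have hrne : r ≠ 0 := ne_of_gt hr
  -- IBP identity: n * (- H1 r) = -r * (H r - H2r)
  have hibp : (n:ℝ) * (-(H1 r)) = -r * (H r - H2r) := by
    rw [hH1, neg_neg, hH, hH2r]
    exact ibp n hn r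
  -- derivative of ρ
  have hdρ : HasDerivAt ρ ((H2r * H r - H1 r * H1 r) / H r ^ 2) r := by
    rw [hρfun]
    exact hdH1.div hdH hHne
  have hH2 : H2r = H r - (n:ℝ) * H1 r / r := by
    field_simp
    linear_combination -hibp
  rw [hdρ.deriv, hρ r, hH2]
  field_simp
  ring
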